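/- Let u ∈ 𝒬 with Legendre transform f, let h > 0, and let q ∈ ∂Δ. Then the intersection of the segment [o, q] with W_h is connected, and the intersection of [o, q] with Δ̄ \ W_h is connected. -/

import Mathlib

open MeasureTheory Set Filter Metric
open scoped RealInnerProductSpace ENNReal NNReal Topology

noncomputable section

/-- A rational piecewise-linear convex function on `ℝⁿ`: a (pointwise) maximum of finitely
many affine functions with rational coefficients. -/
def IsRPL {n : ℕ} (u : EuclideanSpace ℝ (Fin n) → ℝ) : Prop :=
  ∃ (k : ℕ) (a : Fin (k + 1) → Fin n → ℚ) (b : Fin (k + 1) → ℚ),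
    ∀ ξ, u ξ = Finset.univ.sup' Finset.univ_nonempty
      (fun j => (∑ i, (a j i : ℝ) * ξ i) + (b j : ℝ))

/-- The Donaldson linear functional `L_A(u) = ∫_{∂Δ} u dσ − ∫_Δ A u dμ` for real-valued `u`. -/
def LA {n : ℕ} (Δbar : Set (EuclideanSpace ℝ (Fin n))) (σ : Measure (EuclideanSpace ℝ (Fin n)))
    (A u : EuclideanSpace ℝ (Fin n) → ℝ) : ℝ :=
  ∫ ξ, u ξ ∂σ - ∫ ξ in Δbar, A ξ * u ξ

/-- The Donaldson linear functional for `[0,∞]`-valued convex functions. -/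
def LAQ {n : ℕ} (Δbar : Set (EuclideanSpace ℝ (Fin n))) (σ : Measure (EuclideanSpace ℝ (Fin n)))
    (A : EuclideanSpace ℝ (Fin n) → ℝ) (u : EuclideanSpace ℝ (Fin n) → ℝ≥0∞) : ℝ :=
  (∫⁻ ξ, u ξ ∂σ).toReal - ∫ ξ in Δbar, A ξ * (u ξ).toReal

/-- Convexity for `[0,∞]`-valued functions on a convex set. -/
def ConvexOnENN {n : ℕ} (Δbar : Set (EuclideanSpace ℝ (Fin n)))
    (u : EuclideanSpace ℝ (Fin n) → ℝ≥0∞) : Prop :=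
  ∀ ξ ∈ Δbar, ∀ η ∈ Δbar, ∀ t : ℝ, 0 ≤ t → t ≤ 1 →
    u (t • ξ + (1 - t) • η) ≤ ENNReal.ofReal t * u ξ + ENNReal.ofReal (1 - t) * u η

/-- The Legendre transform `f(x) = sup_{ξ ∈ Δ̄} (⟨x, ξ⟩ − u(ξ))` of a `[0,∞]`-valued
function `u` on `Δ̄` (points where `u = ∞` do not contribute to the supremum). -/
def legendreQ {n : ℕ} (Δbar : Set (EuclideanSpace ℝ (Fin n)))
    (u : EuclideanSpace ℝ (Fin n) → ℝ≥0∞) (x : EuclideanSpace ℝ (Fin n)) : ℝ :=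
  sSup {y : ℝ | ∃ ξ ∈ Δbar, u ξ ≠ ⊤ ∧ y = ⟪x, ξ⟫ - (u ξ).toReal}

/-- The Legendre transform of a real-valued function on `Δ̄`. -/
def legendreR {n : ℕ} (Δbar : Set (EuclideanSpace ℝ (Fin n)))
    (u : EuclideanSpace ℝ (Fin n) → ℝ) (x : EuclideanSpace ℝ (Fin n)) : ℝ :=
  sSup {y : ℝ | ∃ ξ ∈ Δbar, y = ⟪x, ξ⟫ - u ξ}

/-- The subdifferential `Df(p)` of a (convex) function `f : ℝⁿ → ℝ` at `p`. -/
def Dsub {n : ℕ} (f : EuclideanSpace ℝ (Fin n) → ℝ) (p : EuclideanSpace ℝ (Fin n)) :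
    Set (EuclideanSpace ℝ (Fin n)) :=
  {q | ∀ x, f p + ⟪q, x - p⟫ ≤ f x}

/-- `Df(E) = ⋃_{p ∈ E} Df(p)`. -/
def DsubSet {n : ℕ} (f : EuclideanSpace ℝ (Fin n) → ℝ) (s : Set (EuclideanSpace ℝ (Fin n))) :
    Set (EuclideanSpace ℝ (Fin n)) :=
  ⋃ p ∈ s, Dsub f p

/-- The subdifferential `Du(q)` of a `[0,∞]`-valued convex function `u` on `Δ̄` at `q`. -/
def DsubU {n : ℕ} (Δbar : Set (EuclideanSpace ℝ (Fin n)))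
    (u : EuclideanSpace ℝ (Fin n) → ℝ≥0∞) (q : EuclideanSpace ℝ (Fin n)) :
    Set (EuclideanSpace ℝ (Fin n)) :=
  {p | u q ≠ ⊤ ∧ ∀ ξ ∈ Δbar, ENNReal.ofReal ((u q).toReal + ⟪p, ξ - q⟫) ≤ u ξ}

/-- The subdifferential of a real-valued convex function `u` on `Δ̄` at `q`. -/
def DsubR {n : ℕ} (Δbar : Set (EuclideanSpace ℝ (Fin n)))
    (u : EuclideanSpace ℝ (Fin n) → ℝ) (q : EuclideanSpace ℝ (Fin n)) :
    Set (EuclideanSpace ℝ (Fin n)) :=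
  {p | ∀ ξ ∈ Δbar, u q + ⟪p, ξ - q⟫ ≤ u ξ}

/-- The sublevel set `S_f(0, h) = {x : f(x) ≤ h}`. -/
def Ssub {n : ℕ} (f : EuclideanSpace ℝ (Fin n) → ℝ) (h : ℝ) :
    Set (EuclideanSpace ℝ (Fin n)) :=
  {x | f x ≤ h}

/-- `u_h(ξ)`: the supremum of the affine functions defining supporting hyperplanes of the
graph of `u` at points of `W`. -/
def uhQ {n : ℕ} (Δbar : Set (EuclideanSpace ℝ (Fin n)))
    (u : EuclideanSpace ℝ (Fin n) → ℝ≥0∞) (W : Set (EuclideanSpace ℝ (Fin n)))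
    (ξ : EuclideanSpace ℝ (Fin n)) : ℝ :=
  sSup {y : ℝ | ∃ q ∈ W, ∃ p ∈ DsubU Δbar u q, y = (u q).toReal + ⟪p, ξ - q⟫}

/-- `u_h(ξ)` for real-valued `u`. -/
def uhR {n : ℕ} (Δbar : Set (EuclideanSpace ℝ (Fin n)))
    (u : EuclideanSpace ℝ (Fin n) → ℝ) (W : Set (EuclideanSpace ℝ (Fin n)))
    (ξ : EuclideanSpace ℝ (Fin n)) : ℝ :=
  sSup {y : ℝ | ∃ q ∈ W, ∃ p ∈ DsubR Δbar u q, y = u q + ⟪p, ξ - q⟫}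

/-- Membership in the class `𝒬`. -/
def memQ {n : ℕ} (Δbar : Set (EuclideanSpace ℝ (Fin n)))
    (σ : Measure (EuclideanSpace ℝ (Fin n))) (o : EuclideanSpace ℝ (Fin n)) (P : ℝ)
    (u : EuclideanSpace ℝ (Fin n) → ℝ≥0∞) : Prop :=
  LowerSemicontinuousOn u Δbar ∧
  ConvexOnENN Δbar u ∧
  (∀ ξ ∈ interior Δbar, u ξ ≠ ⊤) ∧
  (∃ uk : ℕ → EuclideanSpace ℝ (Fin n) → ℝ,
      (∀ k, IsRPL (uk k)) ∧ (∀ k, ∀ ξ ∈ Δbar, 0 ≤ uk k ξ) ∧ (∀ k, uk k o = 0) ∧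
      (∀ k, ∫ ξ, uk k ξ ∂σ ≤ P) ∧
      TendstoLocallyUniformlyOn (fun k ξ => uk k ξ) (fun ξ => (u ξ).toReal)
        atTop (interior Δbar)) ∧
  (∫⁻ ξ, u ξ ∂σ) = 1 ∧
  u o = 0
/-- Relative K̂-polystability: `L_A(u) ≥ 0` for every bounded lower semicontinuous convex
function `u` on `Δ̄`, with equality iff `u` is affine on `Δ`. -/
def RelKHatPolystable {n : ℕ} (Δbar : Set (EuclideanSpace ℝ (Fin n)))
    (σ : Measure (EuclideanSpace ℝ (Fin n))) (A : EuclideanSpace ℝ (Fin n) → ℝ) : Prop :=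
  ∀ u : EuclideanSpace ℝ (Fin n) → ℝ, ConvexOn ℝ Δbar u → LowerSemicontinuousOn u Δbar →
    (∃ C : ℝ, ∀ ξ ∈ Δbar, |u ξ| ≤ C) →
    0 ≤ LA Δbar σ A u ∧
      (LA Δbar σ A u = 0 ↔
        ∃ (p : EuclideanSpace ℝ (Fin n)) (cst : ℝ),
          ∀ ξ ∈ interior Δbar, u ξ = ⟪p, ξ⟫ + cst)

/-- Uniform relative K-polystability with constant `l > 0`. -/
def UnifRelKPolystable {n : ℕ} (Δbar : Set (EuclideanSpace ℝ (Fin n)))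
    (σ : Measure (EuclideanSpace ℝ (Fin n))) (A : EuclideanSpace ℝ (Fin n) → ℝ)
    (p₀ : EuclideanSpace ℝ (Fin n)) (l : ℝ) : Prop :=
  ∀ u : EuclideanSpace ℝ (Fin n) → ℝ, IsRPL u → u p₀ = 0 → (∀ ξ ∈ Δbar, 0 ≤ u ξ) →
    l * ∫ ξ, u ξ ∂σ ≤ LA Δbar σ A u

/-- The weighted linear functional `L_A(u) = ∫_{∂Δ} u 𝔻 dσ − ∫_Δ A u 𝔻 dμ`. -/
def LAD {n : ℕ} (Δbar : Set (EuclideanSpace ℝ (Fin n)))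
    (σ : Measure (EuclideanSpace ℝ (Fin n))) (D A u : EuclideanSpace ℝ (Fin n) → ℝ) : ℝ :=
  ∫ ξ, u ξ * D ξ ∂σ - ∫ ξ in Δbar, A ξ * u ξ * D ξ

/-- The weighted linear functional for `[0,∞]`-valued `u`. -/
def LAQD {n : ℕ} (Δbar : Set (EuclideanSpace ℝ (Fin n)))
    (σ : Measure (EuclideanSpace ℝ (Fin n))) (D A : EuclideanSpace ℝ (Fin n) → ℝ)
    (u : EuclideanSpace ℝ (Fin n) → ℝ≥0∞) : ℝ :=
  (∫⁻ ξ, u ξ * ENNReal.ofReal (D ξ) ∂σ).toReal - ∫ ξ in Δbar, A ξ * (u ξ).toReal * D ξ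

/-- Relative K̂-polystability for `(Δ, 𝔻, A)`. -/
def RelKHatPolystableD {n : ℕ} (Δbar : Set (EuclideanSpace ℝ (Fin n)))
    (σ : Measure (EuclideanSpace ℝ (Fin n))) (D A : EuclideanSpace ℝ (Fin n) → ℝ) : Prop :=
  ∀ u : EuclideanSpace ℝ (Fin n) → ℝ, ConvexOn ℝ Δbar u → LowerSemicontinuousOn u Δbar →
    (∃ C : ℝ, ∀ ξ ∈ Δbar, |u ξ| ≤ C) →
    0 ≤ LAD Δbar σ D A u ∧
      (LAD Δbar σ D A u = 0 ↔
        ∃ (p : EuclideanSpace ℝ (Fin n)) (cst : ℝ),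
          ∀ ξ ∈ interior Δbar, u ξ = ⟪p, ξ⟫ + cst)

/-- Uniform relative K-polystability for `(Δ, 𝔻, A)` with constant `l > 0`. -/
def UnifRelKPolystableD {n : ℕ} (Δbar : Set (EuclideanSpace ℝ (Fin n)))
    (σ : Measure (EuclideanSpace ℝ (Fin n))) (D A : EuclideanSpace ℝ (Fin n) → ℝ)
    (p₀ : EuclideanSpace ℝ (Fin n)) (l : ℝ) : Prop :=
  ∀ u : EuclideanSpace ℝ (Fin n) → ℝ, IsRPL u → u p₀ = 0 → (∀ ξ ∈ Δbar, 0 ≤ u ξ) →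
    l * ∫ ξ, u ξ * D ξ ∂σ ≤ LAD Δbar σ D A u

/-- Membership in the class `𝒬_𝔻`. -/
def memQD {n : ℕ} (Δbar : Set (EuclideanSpace ℝ (Fin n)))
    (σ : Measure (EuclideanSpace ℝ (Fin n))) (D : EuclideanSpace ℝ (Fin n) → ℝ)
    (o : EuclideanSpace ℝ (Fin n)) (P : ℝ) (u : EuclideanSpace ℝ (Fin n) → ℝ≥0∞) : Prop :=
  LowerSemicontinuousOn u Δbar ∧
  ConvexOnENN Δbar u ∧
  (∀ ξ ∈ interior Δbar, u ξ ≠ ⊤) ∧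
  (∃ uk : ℕ → EuclideanSpace ℝ (Fin n) → ℝ,
      (∀ k, IsRPL (uk k)) ∧ (∀ k, ∀ ξ ∈ Δbar, 0 ≤ uk k ξ) ∧ (∀ k, uk k o = 0) ∧
      (∀ k, ∫ ξ, uk k ξ * D ξ ∂σ ≤ P) ∧
      TendstoLocallyUniformlyOn (fun k ξ => uk k ξ) (fun ξ => (u ξ).toReal)
        atTop (interior Δbar)) ∧
  (∫⁻ ξ, u ξ * ENNReal.ofReal (D ξ) ∂σ) = 1 ∧
  u o = 0

/-- `‖u‖² = ∫_Δ u² dμ − (∫_Δ u dμ)²/μ(Δ)`. -/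
def normSqW {n : ℕ} (Δbar : Set (EuclideanSpace ℝ (Fin n)))
    (u : EuclideanSpace ℝ (Fin n) → ℝ) : ℝ :=
  (∫ ξ in interior Δbar, (u ξ) ^ 2) -
    (∫ ξ in interior Δbar, u ξ) ^ 2 / (volume (interior Δbar)).toReal

/-- `‖u‖`. -/
def normW {n : ℕ} (Δbar : Set (EuclideanSpace ℝ (Fin n)))
    (u : EuclideanSpace ℝ (Fin n) → ℝ) : ℝ :=
  Real.sqrt (normSqW Δbar u)

/-- `a = σ(∂Δ)/μ(Δ)`. -/
def aConst {n : ℕ} (Δbar : Set (EuclideanSpace ℝ (Fin n)))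
    (σ : Measure (EuclideanSpace ℝ (Fin n))) : ℝ :=
  (σ (frontier Δbar)).toReal / (volume (interior Δbar)).toReal

/-- `L_a(u) = ∫_{∂Δ} u dσ − a ∫_Δ u dμ`. -/
def La {n : ℕ} (Δbar : Set (EuclideanSpace ℝ (Fin n)))
    (σ : Measure (EuclideanSpace ℝ (Fin n))) (u : EuclideanSpace ℝ (Fin n) → ℝ) : ℝ :=
  ∫ ξ, u ξ ∂σ - aConst Δbar σ * ∫ ξ in interior Δbar, u ξ

/-- `W(u) = L_a(u)/‖u‖`. -/
def Wfun {n : ℕ} (Δbar : Set (EuclideanSpace ℝ (Fin n)))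
    (σ : Measure (EuclideanSpace ℝ (Fin n))) (u : EuclideanSpace ℝ (Fin n) → ℝ) : ℝ :=
  La Δbar σ u / normW Δbar u

/-- Membership in `C₁ ∩ L²(Δ)`: convex and continuous on `Δ*`, integrable on `∂Δ`
with respect to `σ`, and square integrable on `Δ`. -/
def memC1L2 {n : ℕ} (Δstar Δbar : Set (EuclideanSpace ℝ (Fin n)))
    (σ : Measure (EuclideanSpace ℝ (Fin n))) (u : EuclideanSpace ℝ (Fin n) → ℝ) : Prop :=
  ConvexOn ℝ Δstar u ∧ ContinuousOn u Δstar ∧ Integrable u σ ∧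
    MemLp u 2 (volume.restrict (interior Δbar))
/-- Membership in the class `C*^P`. -/
def memCstarP {n : ℕ} (Δbar : Set (EuclideanSpace ℝ (Fin n)))
    (σ : Measure (EuclideanSpace ℝ (Fin n))) (p₀ : EuclideanSpace ℝ (Fin n)) (P : ℝ)
    (u : EuclideanSpace ℝ (Fin n) → ℝ≥0∞) : Prop :=
  LowerSemicontinuousOn u Δbar ∧
  ConvexOnENN Δbar u ∧
  (∀ ξ ∈ interior Δbar, u ξ ≠ ⊤) ∧
  ∃ vk : ℕ → EuclideanSpace ℝ (Fin n) → ℝ,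
    (∀ k, IsRPL (vk k)) ∧ (∀ k, ∀ ξ ∈ Δbar, 0 ≤ vk k ξ) ∧ (∀ k, vk k p₀ = 0) ∧
    (∀ k, ∫ ξ, vk k ξ ∂σ ≤ P) ∧
    TendstoLocallyUniformlyOn (fun k ξ => vk k ξ) (fun ξ => (u ξ).toReal)
      atTop (interior Δbar)

/-- `u^o = u − u(o) − ⟨p^o, ·⟩` (with `o` the origin). -/
def uoF {n : ℕ} (u : EuclideanSpace ℝ (Fin n) → ℝ) (po : EuclideanSpace ℝ (Fin n)) :
    EuclideanSpace ℝ (Fin n) → ℝ :=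
  fun ξ => u ξ - u 0 - ⟪po, ξ⟫

/-- `W_h = Df^o(cl S_{f^o}(0,h))` where `f^o` is the Legendre transform of `u^o`. -/
def WhF {n : ℕ} (Δbar : Set (EuclideanSpace ℝ (Fin n)))
    (u : EuclideanSpace ℝ (Fin n) → ℝ) (po : EuclideanSpace ℝ (Fin n)) (h : ℝ) :
    Set (EuclideanSpace ℝ (Fin n)) :=
  DsubSet (legendreR Δbar (uoF u po)) (closure (Ssub (legendreR Δbar (uoF u po)) h))

/-- `u_h = u^o_h + u(o) + ⟨p^o, ·⟩`. -/
def uhF {n : ℕ} (Δbar : Set (EuclideanSpace ℝ (Fin n)))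
    (u : EuclideanSpace ℝ (Fin n) → ℝ) (po : EuclideanSpace ℝ (Fin n)) (h : ℝ) :
    EuclideanSpace ℝ (Fin n) → ℝ :=
  fun ξ => uhR Δbar (uoF u po) (WhF Δbar u po h) ξ + u 0 + ⟪po, ξ⟫
/-- For `u ∈ 𝒬` with Legendre transform `f`, `h > 0` and `q ∈ ∂Δ`, the
intersection of the segment `[o, q]` with `W_h` is connected, and its intersection with
`Δ̄ \ W_h` is connected. -/
theorem segment_inter_Wh_connected {n d : ℕ} (hn : 1 ≤ n)
    (ν : Fin d → EuclideanSpace ℝ (Fin n)) (lam : Fin d → ℝ) (c : Fin d → ℝ)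
    (Δbar : Set (EuclideanSpace ℝ (Fin n))) (σ : Measure (EuclideanSpace ℝ (Fin n)))
    (P : ℝ) (u : EuclideanSpace ℝ (Fin n) → ℝ≥0∞) (h : ℝ) (q : EuclideanSpace ℝ (Fin n))
    (hΔ : Δbar = {ξ | ∀ i, lam i ≤ ⟪ξ, ν i⟫})
    (hcomp : IsCompact Δbar) (hne : (interior Δbar).Nonempty)
    (hc : ∀ i, 0 < c i)
    (hσ : σ = ∑ i, (ENNReal.ofReal (c i)) •
        (Measure.hausdorffMeasure ((n : ℝ) - 1)).restrict
          (Δbar ∩ {ξ | ⟪ξ, ν i⟫ = lam i}))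
    (ho : (0 : EuclideanSpace ℝ (Fin n)) ∈ interior Δbar)
    (hP : 0 < P)
    (hu : memQ Δbar σ 0 P u)
    (hh : 0 < h)
    (hq : q ∈ frontier Δbar) :
    IsPreconnected (segment ℝ (0 : EuclideanSpace ℝ (Fin n)) q ∩
        DsubSet (legendreQ Δbar u) (closure (Ssub (legendreQ Δbar u) h))) ∧
      IsPreconnected (segment ℝ (0 : EuclideanSpace ℝ (Fin n)) q ∩
        (Δbar \ DsubSet (legendreQ Δbar u) (closure (Ssub (legendreQ Δbar u) h)))) := by
  
  classical
  obtain ⟨hlsc, hconvU, hfin, ⟨uk, hukRPL, hukpos, huko, hukP, huklim⟩, hInt, hu0⟩ := hu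
  set f := legendreQ Δbar u with hf
  set W := DsubSet (legendreQ Δbar u) (closure (Ssub (legendreQ Δbar u) h)) with hWdef
  have hclosed : IsClosed Δbar := hcomp.isClosed
  have hqΔ : q ∈ Δbar := by
    have := frontier_subset_closure (s := Δbar) hq
    rwa [hclosed.closure_eq] at this
  have h0Δ : (0 : (EuclideanSpace ℝ (Fin n))) ∈ Δbar := interior_subset ho
  -- convexity of Δbar
  have hconvΔ : Convex ℝ Δbar := by
    rw [hΔ]
    intro x hx y hy a b ha hb hab i
    have hx' := hx i
    have hy' := hy i
    have : ⟪a • x + b • y, ν i⟫ = a * ⟪x, ν i⟫ + b * ⟪y, ν i⟫ := by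
      rw [inner_add_left, real_inner_smul_left, real_inner_smul_left]
    have key : a * lam i + b * lam i ≤ a * ⟪x, ν i⟫ + b * ⟪y, ν i⟫ :=
      add_le_add (mul_le_mul_of_nonneg_left hx' ha) (mul_le_mul_of_nonneg_left hy' hb)
    have habl : a * lam i + b * lam i = lam i := by rw [← add_mul, hab, one_mul]
    show lam i ≤ ⟪a • x + b • y, ν i⟫
    rw [this]
    linarith
  -- a bound on Δbar
  obtain ⟨R₀, hR₀⟩ := hcomp.isBounded.exists_norm_le
  set R : ℝ := max R₀ 0 with hRdef
  have hR : ∀ ξ ∈ Δbar, ‖ξ‖ ≤ R := fun ξ hξ => le_trans (hR₀ ξ hξ) (le_max_left _ _)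
  have hRnn : 0 ≤ R := le_max_right _ _
  -- continuity of u.toReal on the interior
  have hucont : ContinuousOn (fun ξ => (u ξ).toReal) (interior Δbar) := by
    refine huklim.continuousOn (Filter.Eventually.of_forall fun k => ?_).frequently
    obtain ⟨m, a, b, hab⟩ := hukRPL k
    have : Continuous (uk k) := by
      have : Continuous fun ξ : (EuclideanSpace ℝ (Fin n)) => Finset.univ.sup' Finset.univ_nonempty
          (fun j : Fin (m + 1) => (∑ i, (a j i : ℝ) * ξ i) + (b j : ℝ)) := by
        exact Continuous.finset_sup'_apply Finset.univ_nonempty fun j _ =>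
          (continuous_finset_sum _ fun i _ =>
            continuous_const.mul ((EuclideanSpace.proj i).continuous)).add continuous_const
      exact (funext hab : uk k = _) ▸ this
    exact this.continuousOn
  -- basic facts about the Legendre transform
  have hSne : ∀ x : (EuclideanSpace ℝ (Fin n)), {y : ℝ | ∃ ξ ∈ Δbar, u ξ ≠ ⊤ ∧ y = ⟪x, ξ⟫ - (u ξ).toReal}.Nonempty := by
    intro x
    exact ⟨⟪x, (0 : (EuclideanSpace ℝ (Fin n)))⟫ - (u 0).toReal, 0, h0Δ, by simp [hu0], rfl⟩
  have hSbdd : ∀ x : (EuclideanSpace ℝ (Fin n)), BddAbove {y : ℝ | ∃ ξ ∈ Δbar, u ξ ≠ ⊤ ∧ y = ⟪x, ξ⟫ - (u ξ).toReal} := by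
    intro x
    refine ⟨‖x‖ * R, fun y hy => ?_⟩
    obtain ⟨ξ, hξ, -, rfl⟩ := hy
    have h1 : ⟪x, ξ⟫ ≤ ‖x‖ * ‖ξ‖ := real_inner_le_norm x ξ
    have h2 : ‖x‖ * ‖ξ‖ ≤ ‖x‖ * R := by
      exact mul_le_mul_of_nonneg_left (hR ξ hξ) (norm_nonneg x)
    have h3 : 0 ≤ (u ξ).toReal := ENNReal.toReal_nonneg
    linarith
  have hf_ge : ∀ (x ξ : (EuclideanSpace ℝ (Fin n))), ξ ∈ Δbar → u ξ ≠ ⊤ → ⟪x, ξ⟫ - (u ξ).toReal ≤ f x := by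
    intro x ξ hξ hne
    exact le_csSup (hSbdd x) ⟨ξ, hξ, hne, rfl⟩
  have hf_le : ∀ (x : (EuclideanSpace ℝ (Fin n))) (B : ℝ),
      (∀ ξ ∈ Δbar, u ξ ≠ ⊤ → ⟪x, ξ⟫ - (u ξ).toReal ≤ B) → f x ≤ B := by
    intro x B hB
    refine csSup_le (hSne x) ?_
    rintro y ⟨ξ, hξ, hne, rfl⟩
    exact hB ξ hξ hne
  have hf0 : 0 ≤ f 0 := by
    have := hf_ge 0 0 h0Δ (by simp [hu0])
    simpa [hu0] using this
  -- f is Lipschitz, hence continuous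
  have hflip : ∀ x y : (EuclideanSpace ℝ (Fin n)), f x ≤ f y + R * ‖x - y‖ := by
    intro x y
    refine hf_le x _ fun ξ hξ hne => ?_
    have h1 : ⟪y, ξ⟫ - (u ξ).toReal ≤ f y := hf_ge y ξ hξ hne
    have h2 : ⟪x - y, ξ⟫ ≤ R * ‖x - y‖ := by
      calc ⟪x - y, ξ⟫ ≤ ‖x - y‖ * ‖ξ‖ := real_inner_le_norm _ _
        _ ≤ ‖x - y‖ * R := mul_le_mul_of_nonneg_left (hR ξ hξ) (norm_nonneg _)
        _ = R * ‖x - y‖ := mul_comm _ _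
    have h3 : ⟪x, ξ⟫ = ⟪y, ξ⟫ + ⟪x - y, ξ⟫ := by rw [← inner_add_left]; congr 1; abel
    linarith
  have hfcont : Continuous f := by
    refine (LipschitzWith.of_dist_le_mul (K := R.toNNReal) (f := f) fun x y => ?_).continuous
    have h1 : f x - f y ≤ R * ‖x - y‖ := by have := hflip x y; linarith
    have h2 : f y - f x ≤ R * ‖x - y‖ := by
      have := hflip y x
      rw [norm_sub_rev] at this
      linarith
    rw [Real.dist_eq, dist_eq_norm, abs_sub_le_iff]
    constructor <;> simp only [Real.coe_toNNReal _ hRnn] <;> [exact h1; exact h2]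
  -- characterization of membership in W
  have hSclosed : closure (Ssub f h) = Ssub f h :=
    (isClosed_le hfcont continuous_const).closure_eq
  have hW_iff : ∀ z : (EuclideanSpace ℝ (Fin n)), z ∈ W ↔ ∃ p : (EuclideanSpace ℝ (Fin n)), f p ≤ h ∧ ∀ x, f p + ⟪z, x - p⟫ ≤ f x := by
    intro z
    constructor
    · rintro hzW
      obtain ⟨p, hp, hz⟩ := Set.mem_iUnion₂.1 hzW
      rw [hSclosed] at hp
      exact ⟨p, hp, hz⟩
    · rintro ⟨p, hp, hz⟩
      exact Set.mem_iUnion₂.2 ⟨p, by rw [hSclosed]; exact hp, hz⟩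
  -- existence of minimizers of x ↦ f x - ⟪t•q, x⟫ for 0 ≤ t < 1
  have hmin : ∀ t : ℝ, 0 ≤ t → t < 1 →
      ∃ p : (EuclideanSpace ℝ (Fin n)), ∀ x, f p - ⟪t • q, p⟫ ≤ f x - ⟪t • q, x⟫ := by
    intro t ht ht1
    obtain ⟨z, hzdef⟩ : ∃ z : (EuclideanSpace ℝ (Fin n)), z = t • q := ⟨_, rfl⟩
    have hzint : z ∈ interior Δbar := by
      have := hconvΔ.combo_interior_closure_mem_interior ho (subset_closure hqΔ)
        (show (0:ℝ) < 1 - t by linarith) ht (by ring)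
      rw [hzdef]
      simpa using this
    obtain ⟨ε₀, hε₀, hball₀⟩ := Metric.isOpen_iff.1 isOpen_interior z hzint
    set ε : ℝ := ε₀ / 2 with hεdef
    have hε : 0 < ε := by positivity
    have hball : Metric.closedBall z ε ⊆ interior Δbar :=
      subset_trans (Metric.closedBall_subset_ball (by simp [hεdef]; linarith)) hball₀
    obtain ⟨C₀, hC₀⟩ := (isCompact_closedBall z ε).exists_bound_of_continuousOn
      (hucont.mono hball)
    set C : ℝ := max C₀ 0 with hCdef
    have hCnn : 0 ≤ C := le_max_right _ _
    have hC : ∀ ξ ∈ Metric.closedBall z ε, (u ξ).toReal ≤ C := by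
      intro ξ hξ
      have := hC₀ ξ hξ
      have := le_trans (le_abs_self _) this
      exact le_trans this (le_max_left _ _)
    -- coercivity
    have hcoer : ∀ x : (EuclideanSpace ℝ (Fin n)), ε * ‖x‖ - C ≤ f x - ⟪z, x⟫ := by
      intro x
      rcases eq_or_ne x 0 with rfl | hx0
      · simpa using le_trans (by linarith : -C ≤ (0:ℝ)) hf0
      · have hnx : 0 < ‖x‖ := norm_pos_iff.2 hx0
        obtain ⟨ξx, hξxdef⟩ :
            ∃ ξx : (EuclideanSpace ℝ (Fin n)), ξx = z + (ε / ‖x‖) • x := ⟨_, rfl⟩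
        have hξxball : ξx ∈ Metric.closedBall z ε := by
          rw [Metric.mem_closedBall, dist_eq_norm]
          have : ξx - z = (ε / ‖x‖) • x := by rw [hξxdef]; abel
          rw [this, norm_smul]
          rw [Real.norm_eq_abs, abs_of_nonneg (by positivity)]
          rw [div_mul_cancel₀]
          exact hnx.ne'
        have hξxΔ : ξx ∈ Δbar := interior_subset (hball hξxball)
        have hξxfin : u ξx ≠ ⊤ := hfin ξx (hball hξxball)
        have h1 : ⟪x, ξx⟫ - (u ξx).toReal ≤ f x := hf_ge x ξx hξxΔ hξxfin
        have h2 : ⟪x, ξx⟫ = ⟪z, x⟫ + ε * ‖x‖ := by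
          have e1 : ⟪x, ξx⟫ = ⟪x, z⟫ + (ε / ‖x‖) * ⟪x, x⟫ := by
            rw [hξxdef, inner_add_right, real_inner_smul_right]
          have e2 : (⟪x, x⟫ : ℝ) = ‖x‖ * ‖x‖ := real_inner_self_eq_norm_mul_norm x
          have e3 : (⟪x, z⟫ : ℝ) = ⟪z, x⟫ := real_inner_comm z x
          have e4 : (ε / ‖x‖) * (‖x‖ * ‖x‖) = ε * ‖x‖ := by
            field_simp
          rw [e1, e2, e3, e4]
        have h3 : (u ξx).toReal ≤ C := hC ξx hξxball
        linarith
    -- minimization over a big closed ball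
    obtain ⟨G, hGdef⟩ : ∃ G : (EuclideanSpace ℝ (Fin n)) → ℝ, G = fun x => f x - ⟪z, x⟫ :=
      ⟨_, rfl⟩
    have hGcont : Continuous G := by
      rw [hGdef]; exact hfcont.sub (continuous_const.inner continuous_id)
    have hG0 : G 0 = f 0 := by simp [hGdef]
    have hcoerG : ∀ x, ε * ‖x‖ - C ≤ G x := by
      intro x
      have := hcoer x
      rw [hGdef]
      simpa using this
    obtain ⟨Rb, hRbdef⟩ : ∃ Rb : ℝ, Rb = (C + f 0) / ε + 1 := ⟨_, rfl⟩
    have hRbpos : 0 < Rb := by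
      have h1 : 0 ≤ (C + f 0) / ε := div_nonneg (by linarith) hε.le
      rw [hRbdef]; linarith
    have hεRb : ε * Rb = C + f 0 + ε := by
      rw [hRbdef]; field_simp
    have h0mem : (0 : (EuclideanSpace ℝ (Fin n))) ∈ Metric.closedBall (0 : (EuclideanSpace ℝ (Fin n))) Rb := by
      simp [Metric.mem_closedBall, hRbpos.le]
    obtain ⟨p, hpK, hpmin⟩ := (isCompact_closedBall (0 : (EuclideanSpace ℝ (Fin n))) Rb).exists_isMinOn
      ⟨0, h0mem⟩ hGcont.continuousOn
    have hGform : ∀ x, G x = f x - ⟪t • q, x⟫ := by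
      intro x; rw [hGdef, hzdef]
    refine ⟨p, fun x => ?_⟩
    rw [← hGform, ← hGform]
    rcases le_or_gt ‖x‖ Rb with hx | hx
    · exact hpmin (by simpa [Metric.mem_closedBall, dist_eq_norm] using hx)
    · have h3 : G p ≤ G 0 := hpmin h0mem
      have h4 : ε * ‖x‖ - C ≤ G x := hcoerG x
      have h5 : ε * Rb ≤ ε * ‖x‖ := by
        have := mul_le_mul_of_nonneg_left hx.le hε.le
        linarith
      have h6 : G 0 + ε ≤ G x + C - C := by rw [hG0]; linarith
      linarith
  -- the key monotonicity property
  have hmono : ∀ t1 t2 : ℝ, 0 ≤ t1 → t1 ≤ t2 → t2 ≤ 1 → t2 • q ∈ W → t1 • q ∈ W := by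
    intro t1 t2 ht1 ht12 ht2 hmem
    rcases eq_or_lt_of_le ht12 with rfl | hlt
    · exact hmem
    obtain ⟨p2, hp2h, hp2⟩ := (hW_iff _).1 hmem
    obtain ⟨p1, hp1⟩ := hmin t1 ht1 (lt_of_lt_of_le hlt ht2)
    have hinner2 : ∀ x : (EuclideanSpace ℝ (Fin n)), ⟪t2 • q, x - p2⟫ = t2 * ⟪q, x⟫ - t2 * ⟪q, p2⟫ := by
      intro x; rw [real_inner_smul_left, inner_sub_right]; ring
    have hinner1 : ∀ x : (EuclideanSpace ℝ (Fin n)), ⟪t1 • q, x⟫ = t1 * ⟪q, x⟫ := fun x => real_inner_smul_left _ _ _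
    have hA : f p2 + (t2 * ⟪q, p1⟫ - t2 * ⟪q, p2⟫) ≤ f p1 := by
      have := hp2 p1; rwa [hinner2] at this
    have hB : f p1 - t1 * ⟪q, p1⟫ ≤ f p2 - t1 * ⟪q, p2⟫ := by
      have := hp1 p2; rwa [hinner1, hinner1] at this
    have hp1h : f p1 ≤ h := by nlinarith
    refine (hW_iff _).2 ⟨p1, hp1h, fun x => ?_⟩
    have := hp1 x
    have hx1 : ⟪t1 • q, x - p1⟫ = ⟪t1 • q, x⟫ - ⟪t1 • q, p1⟫ := inner_sub_right _ _ _
    linarith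
  -- assembling: the segment is the image of Icc 0 1
  have hsegW : segment ℝ (0 : (EuclideanSpace ℝ (Fin n))) q = (fun t : ℝ => t • q) '' Set.Icc 0 1 := by
    rw [segment_eq_image]
    congr 1
    funext t
    simp
  have hsegΔ : segment ℝ (0 : (EuclideanSpace ℝ (Fin n))) q ⊆ Δbar := hconvΔ.segment_subset h0Δ hqΔ
  have hctsOn : ContinuousOn (fun t : ℝ => t • q) (Set.univ : Set ℝ) :=
    (continuous_id.smul continuous_const).continuousOn
  constructor
  · -- segment ∩ W
    have him : segment ℝ (0 : (EuclideanSpace ℝ (Fin n))) q ∩ W =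
        (fun t : ℝ => t • q) '' {t : ℝ | t ∈ Set.Icc (0:ℝ) 1 ∧ t • q ∈ W} := by
      ext x
      constructor
      · rintro ⟨hx1, hx2⟩
        rw [hsegW] at hx1
        obtain ⟨t, ht, rfl⟩ := hx1
        exact ⟨t, ⟨ht, hx2⟩, rfl⟩
      · rintro ⟨t, ⟨ht, htW⟩, rfl⟩
        refine ⟨?_, htW⟩
        rw [hsegW]
        exact Set.mem_image_of_mem _ ht
    rw [him]
    have hOrd : Set.OrdConnected {t : ℝ | t ∈ Set.Icc (0:ℝ) 1 ∧ t • q ∈ W} := by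
      refine ⟨fun x hx z hz y hy => ?_⟩
      refine ⟨⟨le_trans hx.1.1 hy.1, le_trans hy.2 hz.1.2⟩, ?_⟩
      exact hmono y z (le_trans hx.1.1 hy.1) hy.2 hz.1.2 hz.2
    exact hOrd.isPreconnected.image (fun t : ℝ => t • q)
      ((continuous_id.smul continuous_const).continuousOn)
  · -- segment ∩ (Δbar \ W)
    have him : segment ℝ (0 : (EuclideanSpace ℝ (Fin n))) q ∩ (Δbar \ W) =
        (fun t : ℝ => t • q) '' {t : ℝ | t ∈ Set.Icc (0:ℝ) 1 ∧ t • q ∉ W} := by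
      ext x
      constructor
      · rintro ⟨hx1, hx2⟩
        rw [hsegW] at hx1
        obtain ⟨t, ht, rfl⟩ := hx1
        exact ⟨t, ⟨ht, hx2.2⟩, rfl⟩
      · rintro ⟨t, ⟨ht, htW⟩, rfl⟩
        have hmem : t • q ∈ segment ℝ (0:(EuclideanSpace ℝ (Fin n))) q := by
          rw [hsegW]
          exact Set.mem_image_of_mem _ ht
        exact ⟨hmem, hsegΔ hmem, htW⟩
    rw [him]
    have hOrd : Set.OrdConnected {t : ℝ | t ∈ Set.Icc (0:ℝ) 1 ∧ t • q ∉ W} := by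
      refine ⟨fun x hx z hz y hy => ?_⟩
      refine ⟨⟨le_trans hx.1.1 hy.1, le_trans hy.2 hz.1.2⟩, fun hyW => ?_⟩
      exact hx.2 (hmono x y hx.1.1 hy.1 (le_trans hy.2 hz.1.2) hyW)
    exact hOrd.isPreconnected.image (fun t : ℝ => t • q)
      ((continuous_id.smul continuous_const).continuousOn)
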